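/- For any w ∈ (0,1], n ∈ ℕ (n ≥ 1), m ≥ 1, and nonnegative reals x_1, ..., x_m with x_i < n/w for all i and ∑_{i=1}^m x_i = n, it holds that ∑_{i=1}^m x_i / (n - w·x_i) ≥ m / (m - w). -/

import Mathlib

private lemma tang (w n a x : ℝ) (hw : 0 < w) (hn : 0 < n) (hx : 0 ≤ x)
    (hd : 0 < n - w * x) (hM : 0 < a - w) :
    1 / (a - w) + a ^ 2 / (n * (a - w) ^ 2) * (x - n / a) ≤ x / (n - w * x) := by
  have ha : 0 < a := lt_trans hw (by linarith)
  have e : x / (n - w * x) - (1 / (a - w) + a ^ 2 / (n * (a - w) ^ 2) * (x - n / a)) =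
      w * (n - a * x) ^ 2 / (n * (a - w) ^ 2 * (n - w * x)) := by
    have := hd.ne'; have := hM.ne'; have := ha.ne'; have := hn.ne'
    have : n - x * w ≠ 0 := by rw [mul_comm]; exact hd.ne'
    field_simp
    ring
  nlinarith [e, div_nonneg (mul_nonneg hw.le (sq_nonneg (n - a * x)))
    (le_of_lt (by positivity : (0:ℝ) < n * (a - w) ^ 2 * (n - w * x)))]

/-- Summation bound lemma. -/
theorem stmt7 (w : ℝ) (hw0 : 0 < w) (hw1 : w ≤ 1) (n : ℕ) (hn : 1 ≤ n)
    (m : ℕ) (hm : 1 ≤ m) (x : Fin m → ℝ) (hx0 : ∀ i, 0 ≤ x i)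
    (hxlt : ∀ i, x i < (n : ℝ) / w) (hsum : ∑ i, x i = (n : ℝ)) :
    (m : ℝ) / (m - w) ≤ ∑ i, x i / ((n : ℝ) - w * x i) := by
  have hnpos : (0:ℝ) < n := by exact_mod_cast hn
  have hd : ∀ i, 0 < (n:ℝ) - w * x i := by
    intro i
    have := (lt_div_iff₀ hw0).1 (hxlt i)
    linarith [this]
  have hM : 0 < (m:ℝ) - w := by
    rcases eq_or_lt_of_le hm with h1 | h2
    · have hm1 : m = 1 := h1.symm
      subst hm1
      have hx0n : x 0 = (n:ℝ) := by simpa using hsum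
      have h2 := hxlt 0
      rw [hx0n] at h2
      have hwlt : w < 1 := by
        by_contra h
        push_neg at h
        have : (n:ℝ) / w ≤ n := by
          rw [div_le_iff₀ hw0]; nlinarith
        linarith
      simp
      linarith
    · have : (2:ℝ) ≤ m := by exact_mod_cast h2
      linarith
  have key : ∀ i, 1 / ((m:ℝ) - w) + (m:ℝ)^2 / (n * ((m:ℝ) - w)^2) * (x i - n / m) ≤
      x i / ((n:ℝ) - w * x i) := fun i =>
    tang w n m (x i) hw0 hnpos (hx0 i) (hd i) hM
  calc (m : ℝ) / (m - w)
      = ∑ i : Fin m, (1 / ((m:ℝ) - w) + (m:ℝ)^2 / (n * ((m:ℝ) - w)^2) * (x i - n / m)) := by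
        rw [Finset.sum_add_distrib, ← Finset.mul_sum, Finset.sum_sub_distrib, hsum]
        simp only [Finset.sum_const, Finset.card_univ, Fintype.card_fin, nsmul_eq_mul]
        have hm0 : (m:ℝ) ≠ 0 := by positivity
        field_simp
        ring
    _ ≤ _ := Finset.sum_le_sum fun i _ => key i
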